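/- For every z ∈ ℝ³, the Lie bracket of f with g_V vanishes: [f, g_V](z) = (0, 0, 0). -/

import Mathlib

noncomputable section

def fVec (cP cI γ : ℝ) (z : ℝ × ℝ × ℝ) : ℝ × ℝ × ℝ :=
  (cP * (z.2.1 + z.2.2) + cI * (1 - z.2.1 - z.2.2), 0, γ * (1 - z.2.1 - z.2.2))

def gPVec (β βh cP : ℝ) (z : ℝ × ℝ × ℝ) : ℝ × ℝ × ℝ :=
  (-(cP * (z.2.1 + z.2.2)), -(β * z.2.1 * (1 - z.2.1 - z.2.2)),
    -(βh * z.2.2 * (1 - z.2.1 - z.2.2)))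

def gVVec (cV : ℝ) (z : ℝ × ℝ × ℝ) : ℝ × ℝ × ℝ := (cV * z.2.1, -z.2.1, z.2.1)

def lieBr (X Y : ℝ × ℝ × ℝ → ℝ × ℝ × ℝ) (z : ℝ × ℝ × ℝ) : ℝ × ℝ × ℝ :=
  fderiv ℝ Y z (X z) - fderiv ℝ X z (Y z)

namespace siriAux

def s : (ℝ × ℝ × ℝ) →L[ℝ] ℝ :=
  (ContinuousLinearMap.fst ℝ ℝ ℝ).comp (ContinuousLinearMap.snd ℝ ℝ (ℝ × ℝ))

def r : (ℝ × ℝ × ℝ) →L[ℝ] ℝ :=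
  (ContinuousLinearMap.snd ℝ ℝ ℝ).comp (ContinuousLinearMap.snd ℝ ℝ (ℝ × ℝ))

lemma hs (z : ℝ × ℝ × ℝ) : HasFDerivAt (fun z : ℝ × ℝ × ℝ => z.2.1) s z := s.hasFDerivAt
lemma hr (z : ℝ × ℝ × ℝ) : HasFDerivAt (fun z : ℝ × ℝ × ℝ => z.2.2) r z := r.hasFDerivAt

def Lf (cP cI γ : ℝ) : (ℝ × ℝ × ℝ) →L[ℝ] (ℝ × ℝ × ℝ) :=
  ((cP - cI) • (s + r)).prod ((0 : (ℝ × ℝ × ℝ) →L[ℝ] ℝ).prod ((-γ) • (s + r)))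

def Lg (cV : ℝ) : (ℝ × ℝ × ℝ) →L[ℝ] (ℝ × ℝ × ℝ) :=
  (cV • s).prod ((-s).prod s)

lemma hf (cP cI γ : ℝ) (z : ℝ × ℝ × ℝ) :
    HasFDerivAt (fVec cP cI γ) (Lf cP cI γ) z := by
  have h1 : HasFDerivAt (fun z : ℝ × ℝ × ℝ => cP * (z.2.1 + z.2.2) + cI * (1 - z.2.1 - z.2.2))
      ((cP - cI) • (s + r)) z := by
    have := (((hs z).add (hr z)).const_mul cP).add
      ((((hasFDerivAt_const (1:ℝ) z).sub (hs z)).sub (hr z)).const_mul cI)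
    refine this.congr_fderiv ?_
    ext <;> simp [s, r] <;> ring
  have h3 : HasFDerivAt (fun z : ℝ × ℝ × ℝ => γ * (1 - z.2.1 - z.2.2)) ((-γ) • (s + r)) z := by
    have := (((hasFDerivAt_const (1:ℝ) z).sub (hs z)).sub (hr z)).const_mul γ
    refine this.congr_fderiv ?_
    ext <;> simp [s, r] <;> ring
  exact HasFDerivAt.prodMk h1 (HasFDerivAt.prodMk (hasFDerivAt_const (0:ℝ) z) h3)

lemma hg (cV : ℝ) (z : ℝ × ℝ × ℝ) : HasFDerivAt (gVVec cV) (Lg cV) z := by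
  have h1 : HasFDerivAt (fun z : ℝ × ℝ × ℝ => cV * z.2.1) (cV • s) z := by
    have := (hs z).const_mul cV
    convert this using 1
  exact HasFDerivAt.prodMk h1 (HasFDerivAt.prodMk ((hs z).neg) (hs z))

end siriAux

open siriAux in
theorem siri_lie_f_gV_zero
    (β βh γ cP cV cI : ℝ)
    (hβ : 0 < β) (hβh : 0 < βh) (hγ : 0 < γ)
    (hcP : 0 < cP) (hcV : 0 < cV) (hcI : 0 < cI) :
    ∀ z : ℝ × ℝ × ℝ, lieBr (fVec cP cI γ) (gVVec cV) z = (0, 0, 0) := by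
  intro z
  unfold lieBr
  rw [(hf cP cI γ z).fderiv, (hg cV z).fderiv]
  simp [Lf, Lg, s, r, fVec, gVVec, Prod.ext_iff]
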